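/- Let Z ⊆ ℝⁿ be closed and convex, let f : Z → ℝⁿ be globally L-Lipschitz with −f β-strongly monotone, and consider the anti-windup approximation ż = F_K(z) := f(P_Z(z)) − (1/K)(z − P_Z(z)) with identity metric G ≡ I. Then for all K with 0 < K < 4β/L², the system has a unique equilibrium point z* ∈ ℝⁿ, every (complete) solution of ż = F_K(z) converges to z* as t → ∞, and P_Z(z*) is the unique equilibrium of the projected dynamical system ż = Π_Z[f](z), z ∈ Z (i.e., the unique point z̄ ∈ Z with Π_Z[f(z̄)](z̄) = 0). -/

import Mathlib

open Metric Set Filter Topology MeasureTheory Pointwise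
open scoped RealInnerProductSpace

noncomputable section

/-- Euclidean space `ℝⁿ`. -/
abbrev Euc (n : ℕ) := EuclideanSpace ℝ (Fin n)

/-- Continuous linear operators on `ℝⁿ` (playing the role of `n × n` matrices). -/
abbrev EucOp (n : ℕ) := Euc n →L[ℝ] Euc n

variable {n : ℕ}

/-- The set of nearest points of `C` to `x` (the Euclidean projection `P_C(x)`). -/
def projSet (C : Set (Euc n)) (x : Euc n) : Set (Euc n) :=
  {c | c ∈ C ∧ dist x c = Metric.infDist x C}

/-- The (Bouligand) tangent cone to `C` at `x`, via sequences:
`v = lim (xk - x)/δk` with `xk ∈ C`, `xk → x`, `δk → 0⁺`. -/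
def tanCone (C : Set (Euc n)) (x : Euc n) : Set (Euc n) :=
  {v | ∃ (xk : ℕ → Euc n) (δk : ℕ → ℝ),
    (∀ k, xk k ∈ C) ∧ Filter.Tendsto xk Filter.atTop (nhds x) ∧
    (∀ k, 0 < δk k) ∧ Filter.Tendsto δk Filter.atTop (nhds 0) ∧
    Filter.Tendsto (fun k => (δk k)⁻¹ • (xk k - x)) Filter.atTop (nhds v)}

/-- Clarke regularity: sequential inner semicontinuity of the tangent-cone map on `C`. -/
def ClarkeRegular (C : Set (Euc n)) : Prop :=
  ∀ x ∈ C, ∀ v ∈ tanCone C x, ∀ xk : ℕ → Euc n,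
    (∀ k, xk k ∈ C) → Filter.Tendsto xk Filter.atTop (nhds x) →
    ∃ vk : ℕ → Euc n, (∀ k, vk k ∈ tanCone C (xk k)) ∧
      Filter.Tendsto vk Filter.atTop (nhds v)

/-- The Euclidean normal cone `N_xC`, the polar of the tangent cone. -/
def normalCone (C : Set (Euc n)) (x : Euc n) : Set (Euc n) :=
  {η | ∀ v ∈ tanCone C x, ⟪η, v⟫ ≤ 0}

/-- `C` is `α`-prox-regular at `x`: every normal vector at `x` is `α`-proximal. -/
def ProxRegularAt (C : Set (Euc n)) (α : ℝ) (x : Euc n) : Prop :=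
  ∀ η ∈ normalCone C x, ∀ y ∈ C, ⟪η, y - x⟫ ≤ α * ‖η‖ * ‖y - x‖ ^ 2

/-- `C` is `α`-prox-regular: Clarke regular and `α`-prox-regular at every point. -/
def ProxRegular (C : Set (Euc n)) (α : ℝ) : Prop :=
  ClarkeRegular C ∧ ∀ x ∈ C, ProxRegularAt C α x

/-- `G` is a (continuous) metric on `C`: continuous, symmetric, positive definite. -/
def IsMetricOn (C : Set (Euc n)) (G : Euc n → EucOp n) : Prop :=
  ContinuousOn G C ∧
    ∀ x ∈ C, (∀ u v : Euc n, ⟪G x u, v⟫ = ⟪u, G x v⟫) ∧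
      ∀ u : Euc n, u ≠ 0 → 0 < ⟪u, G x u⟫

/-- The inner product `⟨u, v⟩_{G(x)} := uᵀ G(x) v` induced by an operator `Gx`. -/
def innerG (Gx : EucOp n) (u v : Euc n) : ℝ := ⟪u, Gx v⟫

/-- The norm `‖u‖_{G(x)}` induced by an operator `Gx`. -/
def normG (Gx : EucOp n) (u : Euc n) : ℝ := Real.sqrt (innerG Gx u u)

/-- The `G`-normal cone `N^G_xC`. -/
def normalConeG (C : Set (Euc n)) (G : Euc n → EucOp n) (x : Euc n) : Set (Euc n) :=
  {η | ∀ v ∈ tanCone C x, innerG (G x) η v ≤ 0}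

/-- The projection `Π^G_C[w](x)`: minimizers of `‖v - w‖_{G(x)}` over the tangent cone. -/
def projTanG (C : Set (Euc n)) (G : Euc n → EucOp n) (w x : Euc n) : Set (Euc n) :=
  {v | v ∈ tanCone C x ∧ ∀ u ∈ tanCone C x, normG (G x) (v - w) ≤ normG (G x) (u - w)}

/-- The Euclidean projection onto the tangent cone, `Π_C[w](x)` (identity metric). -/
def projTanI (C : Set (Euc n)) (w x : Euc n) : Set (Euc n) :=
  {v | v ∈ tanCone C x ∧ ∀ u ∈ tanCone C x, ‖v - w‖ ≤ ‖u - w‖}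

/-- `z` is a Carathéodory solution of `ż ∈ H(z)`, `z ∈ C`, on `[0,T]`, with (a.e.)
derivative `v`: absolute continuity is encoded by the integral representation. -/
def SolutionVia (H : Euc n → Set (Euc n)) (C : Set (Euc n)) (T : ℝ)
    (z v : ℝ → Euc n) : Prop :=
  (∀ t ∈ Set.Icc (0:ℝ) T, z t ∈ C) ∧
  MeasureTheory.IntegrableOn v (Set.Icc (0:ℝ) T) ∧
  (∀ᵐ t ∂(MeasureTheory.volume.restrict (Set.Icc (0:ℝ) T)), v t ∈ H (z t)) ∧
  (∀ t ∈ Set.Icc (0:ℝ) T, z t = z 0 + ∫ s in (0:ℝ)..t, v s)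

/-- `z` is a Carathéodory solution of `ż ∈ H(z)`, `z ∈ C`, on `[0,T]`. -/
def IsSolutionOn (H : Euc n → Set (Euc n)) (C : Set (Euc n)) (T : ℝ)
    (z : ℝ → Euc n) : Prop :=
  ∃ v : ℝ → Euc n, SolutionVia H C T z v

/-- `z : [0,T'] → ℝⁿ` is a `(T, ε)`-truncated solution of `ż ∈ H(z)`, `z ∈ C`,
with initial condition `z₀`. -/
def IsTruncSol (H : Euc n → Set (Euc n)) (C : Set (Euc n)) (T ε : ℝ) (z₀ : Euc n)
    (T' : ℝ) (z : ℝ → Euc n) : Prop :=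
  0 ≤ T' ∧ T' ≤ T ∧ IsSolutionOn H C T' z ∧ z 0 = z₀ ∧
  (∀ t ∈ Set.Icc (0:ℝ) T', ‖z t - z₀‖ ≤ ε) ∧ (T' = T ∨ ‖z T' - z₀‖ = ε)

/-- A complete solution: a solution on every compact interval `[0,T]`. -/
def IsCompleteSol (H : Euc n → Set (Euc n)) (C : Set (Euc n)) (z : ℝ → Euc n) : Prop :=
  ∀ T : ℝ, 0 ≤ T → IsSolutionOn H C T z

/-- The graph of a map defined on `[0,T']`, as a subset of `ℝ × ℝⁿ`. -/
def graphOn (T' : ℝ) (z : ℝ → Euc n) : Set (ℝ × Euc n) :=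
  {p | p.1 ∈ Set.Icc (0:ℝ) T' ∧ p.2 = z p.1}

/-- Painlevé–Kuratowski convergence of a sequence of sets to `L`:
`L` is contained in the inner limit and contains the outer limit. -/
def KuratowskiTendsto {X : Type*} [TopologicalSpace X] (A : ℕ → Set X) (L : Set X) : Prop :=
  (∀ x ∈ L, ∀ U ∈ nhds x, ∀ᶠ i in Filter.atTop, (A i ∩ U).Nonempty) ∧
  (∀ x : X, (∀ U ∈ nhds x, ∃ᶠ i in Filter.atTop, (A i ∩ U).Nonempty) → x ∈ L)

/-- The enlarged set `Z°_α := Z + (1/(2α))·int 𝔹` on which the projection is single-valued. -/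
def ZballSet (Z : Set (Euc n)) (α : ℝ) : Set (Euc n) :=
  Z + Metric.ball (0 : Euc n) (1 / (2 * α))

/-- The anti-windup approximation vector field
`F_K(z) = f(z, P_Z(z)) − (1/K)·G⁻¹(P_Z(z))(z − P_Z(z))`, as a set-valued map. -/
def AWA (f : Euc n → Euc n → Euc n) (Ginv : Euc n → EucOp n) (Z : Set (Euc n)) (K : ℝ)
    (z : Euc n) : Set (Euc n) :=
  (fun zb => f z zb - K⁻¹ • Ginv zb (z - zb)) '' projSet Z z

/-- The special anti-windup vector field `F_K(z) = f(P_Z(z)) − (1/K)·G⁻¹(P_Z(z))(z − P_Z(z))`. -/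
def AWAspec (f : Euc n → Euc n) (Ginv : Euc n → EucOp n) (Z : Set (Euc n)) (K : ℝ)
    (z : Euc n) : Set (Euc n) :=
  (fun zb => f zb - K⁻¹ • Ginv zb (z - zb)) '' projSet Z z

/-- `Ginv` is a pointwise (two-sided) inverse of `G` on `Z`. -/
def InverseOn (G Ginv : Euc n → EucOp n) (Z : Set (Euc n)) : Prop :=
  ∀ x ∈ Z, (∀ u : Euc n, G x (Ginv x u) = u) ∧ (∀ u : Euc n, Ginv x (G x u) = u)

/-- A function of class `K∞` on `[0,∞)`. -/
def ClassKInf (ω : ℝ → ℝ) : Prop :=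
  ContinuousOn ω (Set.Ici (0:ℝ)) ∧ StrictMonoOn ω (Set.Ici (0:ℝ)) ∧
  (∀ M : ℝ, ∃ r : ℝ, 0 ≤ r ∧ M ≤ ω r) ∧ ω 0 = 0 ∧ ∀ r : ℝ, 0 ≤ r → 0 ≤ ω r

/-- A function of class `KL` on `[0,∞)²`. -/
def ClassKL (β : ℝ → ℝ → ℝ) : Prop :=
  (∀ r s : ℝ, 0 ≤ r → 0 ≤ s → 0 ≤ β r s) ∧
  (∀ s : ℝ, 0 ≤ s → MonotoneOn (fun r => β r s) (Set.Ici (0:ℝ))) ∧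
  (∀ r : ℝ, 0 ≤ r → AntitoneOn (β r) (Set.Ici (0:ℝ))) ∧
  (∀ s : ℝ, 0 ≤ s → Filter.Tendsto (fun r => β r s) (nhdsWithin 0 (Set.Ioi 0)) (nhds 0)) ∧
  (∀ r : ℝ, 0 ≤ r → Filter.Tendsto (β r) Filter.atTop (nhds 0))

/-- The local assumption (Assumption 3.3) at `z₀ ∈ Z` with constants `M, ν, μ, α, ε`. -/
def LocalAssumption (Z : Set (Euc n)) (f : Euc n → Euc n → Euc n) (Ginv : Euc n → EucOp n)
    (z₀ : Euc n) (M ν μ α ε : ℝ) : Prop :=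
  (0 < M ∧ 0 < ν ∧ 0 < μ ∧ 0 < α ∧ 0 < ε) ∧
  (∀ z ∈ Metric.closedBall z₀ ε ∩ ZballSet Z α, ∀ zb ∈ projSet Z z, ‖f z zb‖ ≤ M) ∧
  (∀ z ∈ Metric.closedBall z₀ ε ∩ ZballSet Z α, ∀ zb ∈ projSet Z z, ∀ u : Euc n,
    μ * ‖u‖ ^ 2 ≤ ⟪u, Ginv zb u⟫ ∧ ⟪u, Ginv zb u⟫ ≤ ν * ‖u‖ ^ 2) ∧
  (∀ x ∈ Metric.closedBall z₀ ε ∩ Z, ProxRegularAt Z α x)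

/-- The alternate-form vector field `F̂(z) = f(z, P_Z(z)) − N^G_zZ ∩ γ𝔹` (for `z ∈ Z`). -/
def FhatMap (f : Euc n → Euc n → Euc n) (G : Euc n → EucOp n) (Z : Set (Euc n)) (γ : ℝ)
    (z : Euc n) : Set (Euc n) :=
  (fun η => f z z - η) '' {η | η ∈ normalConeG Z G z ∧ ‖η‖ ≤ γ}

/-- The `σ`-perturbation `H_σ(x) := cl co H((x + σ𝔹) ∩ C) + σ𝔹` of a set-valued map. -/
def perturbMap (H : Euc n → Set (Euc n)) (C : Set (Euc n)) (σ : ℝ) (x : Euc n) :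
    Set (Euc n) :=
  closure (convexHull ℝ (⋃ y ∈ Metric.closedBall x σ ∩ C, H y)) +
    Metric.closedBall (0 : Euc n) σ

end


namespace Stmt18Aux

open Metric Set Filter Topology MeasureTheory
open scoped RealInnerProductSpace

noncomputable section

variable {n : ℕ}

lemma mem_projSet_iff {Z : Set (Euc n)} (hZconv : Convex ℝ Z) (hZne : Z.Nonempty)
    {x c : Euc n} :
    c ∈ projSet Z x ↔ c ∈ Z ∧ ∀ y ∈ Z, ⟪x - c, y - c⟫ ≤ 0 := by
  have : Nonempty Z := hZne.to_subtype
  have hiff : ∀ _ : c ∈ Z, (dist x c = Metric.infDist x Z ↔ ∀ y ∈ Z, ⟪x - c, y - c⟫ ≤ 0) := by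
    intro hc
    rw [← norm_eq_iInf_iff_real_inner_le_zero hZconv hc, dist_eq_norm, Metric.infDist_eq_iInf]
    simp only [dist_eq_norm]
  constructor
  · rintro ⟨hc, hd⟩; exact ⟨hc, (hiff hc).1 hd⟩
  · rintro ⟨hc, hv⟩; exact ⟨hc, (hiff hc).2 hv⟩

lemma proj_exists {Z : Set (Euc n)} (hZcl : IsClosed Z) (hZconv : Convex ℝ Z)
    (hZne : Z.Nonempty) (x : Euc n) :
    ∃ c, c ∈ Z ∧ ∀ y ∈ Z, ⟪x - c, y - c⟫ ≤ 0 := by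
  obtain ⟨v, hv, hnorm⟩ := exists_norm_eq_iInf_of_complete_convex hZne hZcl.isComplete hZconv x
  exact ⟨v, hv, (norm_eq_iInf_iff_real_inner_le_zero hZconv hv).1 hnorm⟩

lemma proj_unique {Z : Set (Euc n)} {x c c' : Euc n}
    (hc : c ∈ Z) (h1 : ∀ y ∈ Z, ⟪x - c, y - c⟫ ≤ 0)
    (hc' : c' ∈ Z) (h2 : ∀ y ∈ Z, ⟪x - c', y - c'⟫ ≤ 0) : c = c' := by
  have a1 := h1 c' hc'
  have a2 := h2 c hc
  have key : ‖c' - c‖ ^ 2 ≤ 0 := by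
    have hneg : ⟪(x - c) - (x - c'), c' - c⟫ ≤ 0 := by
      have e : ⟪x - c', c - c'⟫ = -⟪x - c', c' - c⟫ := by
        rw [← inner_neg_right, neg_sub]
      rw [inner_sub_left]; nlinarith [a1, a2, e]
    have h3 : (x - c) - (x - c') = c' - c := by abel
    rw [h3, real_inner_self_eq_norm_sq] at hneg; linarith
  have hz : ‖c' - c‖ ^ 2 = 0 := le_antisymm key (sq_nonneg _)
  have : c' - c = 0 := by rwa [pow_eq_zero_iff two_ne_zero, norm_eq_zero] at hz
  exact (sub_eq_zero.1 this).symm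

lemma proj_nonexp {Z : Set (Euc n)} {P : Euc n → Euc n}
    (hP : ∀ x, P x ∈ Z ∧ ∀ y ∈ Z, ⟪x - P x, y - P x⟫ ≤ 0) (u v : Euc n) :
    ‖P u - P v‖ ≤ ‖u - v‖ := by
  have h1 := (hP u).2 (P v) (hP v).1
  have h2 := (hP v).2 (P u) (hP u).1
  have hkey : ‖P u - P v‖^2 ≤ ⟪u - v, P u - P v⟫ := by
    have e1 : ⟪u - P u, P v - P u⟫ = -⟪u - P u, P u - P v⟫ := by
      rw [← inner_neg_right, neg_sub]
    have e2 : ⟪(u - v) - (P u - P v), P u - P v⟫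
        = ⟪u - v, P u - P v⟫ - ⟪P u - P v, P u - P v⟫ := by rw [inner_sub_left]
    have e3 : (u - v) - (P u - P v) = (u - P u) - (v - P v) := by abel
    rw [real_inner_self_eq_norm_sq] at e2
    have e4 : ⟪(u - P u) - (v - P v), P u - P v⟫
        = ⟪u - P u, P u - P v⟫ - ⟪v - P v, P u - P v⟫ := by rw [inner_sub_left]
    nlinarith [e2, e3 ▸ e2, h1, h2, e1]
  have hCS := real_inner_le_norm (u - v) (P u - P v)
  nlinarith [norm_nonneg (P u - P v), norm_nonneg (u - v)]

lemma vi_exists {Z : Set (Euc n)} (hZcl : IsClosed Z) (hZne : Z.Nonempty)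
    {P : Euc n → Euc n}
    (hP : ∀ x, P x ∈ Z ∧ ∀ y ∈ Z, ⟪x - P x, y - P x⟫ ≤ 0)
    {f : Euc n → Euc n} {L β : ℝ} (hβ : 0 < β)
    (hLip : ∀ x ∈ Z, ∀ y ∈ Z, ‖f x - f y‖ ≤ L * ‖x - y‖)
    (hmono : ∀ x ∈ Z, ∀ x' ∈ Z, β * ‖x - x'‖ ^ 2 ≤ ⟪f x' - f x, x - x'⟫) :
    ∃ zb ∈ Z, ∀ y ∈ Z, ⟪f zb, y - zb⟫ ≤ 0 := by
  have : Nonempty Z := hZne.to_subtype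
  have : CompleteSpace Z := hZcl.completeSpace_coe
  set t0 : ℝ := β / (L^2 + 1) with ht0def
  have hL21 : (0:ℝ) < L^2 + 1 := by positivity
  have ht0 : 0 < t0 := div_pos hβ hL21
  set c1 : ℝ := 1 - 2*t0*β + t0^2*L^2 with hc1def
  have hc1lt : c1 < 1 := by
    have h1 : t0 * L^2 < 2 * β := by
      rw [ht0def, div_mul_eq_mul_div, div_lt_iff₀ hL21]
      nlinarith
    nlinarith
  set θsq : ℝ := max c1 0 with hθsq
  have hθsq0 : 0 ≤ θsq := le_max_right _ _
  have hθsqlt : θsq < 1 := max_lt hc1lt one_pos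
  set θ : ℝ := Real.sqrt θsq with hθ
  have hθ0 : 0 ≤ θ := Real.sqrt_nonneg _
  have hθlt : θ < 1 := by
    rw [hθ, show (1:ℝ) = Real.sqrt 1 by simp]
    exact Real.sqrt_lt_sqrt hθsq0 (by simpa using hθsqlt)
  set Tm : Z → Z := fun x => ⟨P ((x:Euc n) + t0 • f x), (hP _).1⟩ with hTm
  have hcontr : ∀ x y : Z, dist (Tm x) (Tm y) ≤ θ * dist x y := by
    rintro ⟨x, hx⟩ ⟨y, hy⟩
    simp only [hTm, Subtype.dist_eq, dist_eq_norm]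
    have step1 : ‖P (x + t0 • f x) - P (y + t0 • f y)‖ ≤ ‖(x + t0 • f x) - (y + t0 • f y)‖ :=
      proj_nonexp hP _ _
    have heq : (x + t0 • f x) - (y + t0 • f y) = (x - y) + t0 • (f x - f y) := by
      rw [smul_sub]; abel
    have hsq : ‖(x - y) + t0 • (f x - f y)‖^2 ≤ c1 * ‖x - y‖^2 := by
      rw [norm_add_sq_real]
      have hin : ⟪x - y, t0 • (f x - f y)⟫ = t0 * ⟪f x - f y, x - y⟫ := by
        rw [real_inner_smul_right, real_inner_comm]
      have hm : ⟪f x - f y, x - y⟫ ≤ -(β * ‖x - y‖^2) := by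
        have hmm := hmono x hx y hy
        have e : ⟪f y - f x, x - y⟫ = -⟪f x - f y, x - y⟫ := by
          rw [← inner_neg_left]; congr 1; abel
        linarith [e ▸ hmm]
      have hnsm : ‖t0 • (f x - f y)‖^2 ≤ t0^2 * (L * ‖x - y‖)^2 := by
        rw [norm_smul, mul_pow]
        have h1 : ‖f x - f y‖ ≤ L * ‖x - y‖ := hLip x hx y hy
        have h2 : ‖f x - f y‖^2 ≤ (L * ‖x - y‖)^2 := by
          nlinarith [norm_nonneg (f x - f y)]
        have habs : ‖t0‖^2 = t0^2 := by rw [Real.norm_eq_abs, sq_abs]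
        rw [habs]
        nlinarith [sq_nonneg t0]
      rw [hc1def]
      nlinarith [hin, hm, hnsm, ht0]
    have hsq2 : ‖(x + t0 • f x) - (y + t0 • f y)‖^2 ≤ θsq * ‖x - y‖^2 := by
      rw [heq]
      calc ‖(x - y) + t0 • (f x - f y)‖^2 ≤ c1 * ‖x - y‖^2 := hsq
        _ ≤ θsq * ‖x - y‖^2 := by
            apply mul_le_mul_of_nonneg_right (le_max_left _ _) (sq_nonneg _)
    calc ‖P (x + t0 • f x) - P (y + t0 • f y)‖
        ≤ ‖(x + t0 • f x) - (y + t0 • f y)‖ := step1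
      _ = Real.sqrt (‖(x + t0 • f x) - (y + t0 • f y)‖^2) := by
          rw [Real.sqrt_sq (norm_nonneg _)]
      _ ≤ Real.sqrt (θsq * ‖x - y‖^2) := Real.sqrt_le_sqrt hsq2
      _ = θ * ‖x - y‖ := by
          rw [Real.sqrt_mul hθsq0, Real.sqrt_sq (norm_nonneg _)]
  have hCW : ContractingWith θ.toNNReal Tm := by
    constructor
    · simpa [Real.toNNReal_lt_one] using hθlt
    · apply LipschitzWith.of_dist_le_mul
      intro x y
      have := hcontr x y
      rwa [Real.coe_toNNReal θ hθ0]
  set zb := hCW.fixedPoint Tm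
  have hfix : Tm zb = zb := hCW.fixedPoint_isFixedPt
  refine ⟨(zb : Euc n), zb.2, ?_⟩
  intro y hy
  have hchar := (hP ((zb:Euc n) + t0 • f zb)).2 y hy
  have hPz : P ((zb:Euc n) + t0 • f zb) = (zb:Euc n) := congrArg Subtype.val hfix
  rw [hPz] at hchar
  have heq2 : ((zb:Euc n) + t0 • f zb) - (zb:Euc n) = t0 • f zb := by abel
  rw [heq2, real_inner_smul_left] at hchar
  exact le_of_mul_le_mul_left (by linarith [hchar] :
    t0 * ⟪f (zb:Euc n), y - (zb:Euc n)⟫ ≤ t0 * 0) ht0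

lemma delta_pos : ∀ k : ℕ, (0:ℝ) < ((k:ℝ)+1)⁻¹ := fun k => by positivity

lemma delta_le_one : ∀ k : ℕ, ((k:ℝ)+1)⁻¹ ≤ 1 := fun k => by
  rw [inv_le_one_iff₀]; right; linarith [Nat.cast_nonneg (α := ℝ) k]

lemma delta_tendsto : Filter.Tendsto (fun k : ℕ => ((k:ℝ)+1)⁻¹) Filter.atTop (nhds 0) := by
  simpa [one_div] using tendsto_one_div_add_atTop_nhds_zero_nat (𝕜 := ℝ)

lemma zero_mem_tanCone {C : Set (Euc n)} {x : Euc n} (hx : x ∈ C) : (0:Euc n) ∈ tanCone C x := by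
  refine ⟨fun _ => x, fun k => ((k:ℝ)+1)⁻¹, fun _ => hx, tendsto_const_nhds, delta_pos,
    delta_tendsto, ?_⟩
  simp

lemma smul_sub_mem_tanCone {C : Set (Euc n)} (hconv : Convex ℝ C) {x y : Euc n}
    (hx : x ∈ C) (hy : y ∈ C) {s : ℝ} (hs0 : 0 < s) (hs1 : s ≤ 1) :
    s • (y - x) ∈ tanCone C x := by
  refine ⟨fun k => x + (((k:ℝ)+1)⁻¹ * s) • (y - x), fun k => ((k:ℝ)+1)⁻¹, ?_, ?_, delta_pos,
    delta_tendsto, ?_⟩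
  · intro k
    set t : ℝ := ((k:ℝ)+1)⁻¹ * s with ht
    have ht0 : 0 ≤ t := by positivity
    have ht1 : t ≤ 1 := by
      calc t ≤ 1 * 1 := mul_le_mul (delta_le_one k) hs1 hs0.le zero_le_one
        _ = 1 := by ring
    have hmem := hconv hx hy (a := 1 - t) (b := t) (by linarith) ht0 (by ring)
    have heq : (1 - t) • x + t • y = x + t • (y - x) := by
      rw [smul_sub, sub_smul, one_smul]; abel
    rwa [heq] at hmem
  · have h1 : Filter.Tendsto (fun k : ℕ => (((k:ℝ)+1)⁻¹ * s)) Filter.atTop (nhds 0) := by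
      simpa using delta_tendsto.mul_const s
    have h2 := h1.smul_const (y - x)
    rw [zero_smul] at h2
    simpa using (tendsto_const_nhds.add h2 : Filter.Tendsto
      (fun k : ℕ => x + (((k:ℝ)+1)⁻¹ * s) • (y - x)) Filter.atTop (nhds (x + 0)))
  · have heq : (fun k : ℕ => (((k:ℝ)+1)⁻¹)⁻¹ • ((x + (((k:ℝ)+1)⁻¹ * s) • (y - x)) - x))
      = fun _ => s • (y - x) := by
      funext k
      have hne : ((k:ℝ)+1) ≠ 0 := by positivity
      rw [add_sub_cancel_left, smul_smul, inv_inv]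
      congr 1
      field_simp
    rw [heq]; exact tendsto_const_nhds

lemma inner_nonpos_on_tanCone {C : Set (Euc n)} {x η : Euc n}
    (h : ∀ y ∈ C, ⟪η, y - x⟫ ≤ 0) {v : Euc n} (hv : v ∈ tanCone C x) : ⟪η, v⟫ ≤ 0 := by
  obtain ⟨xk, δk, hmem, -, hδpos, -, hlim⟩ := hv
  have hten : Filter.Tendsto (fun k => ⟪η, (δk k)⁻¹ • (xk k - x)⟫) Filter.atTop (nhds ⟪η, v⟫) :=
    (tendsto_const_nhds : Filter.Tendsto (fun _ : ℕ => η) _ (nhds η)).inner hlim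
  refine le_of_tendsto' hten fun k => ?_
  rw [real_inner_smul_right]
  exact mul_nonpos_of_nonneg_of_nonpos (inv_nonneg.2 (hδpos k).le) (h (xk k) (hmem k))

lemma quad_bound {β Ki L c0 a b : ℝ} (hApos : 0 < β - c0)
    (hD : 4*c0*(β+Ki) ≤ 4*β*Ki - L^2) :
    -(β*a^2) + L*(a*b) - Ki*b^2 ≤ -(c0*(a^2+b^2)) := by
  have hAB : 0 ≤ 4*(β-c0)*(Ki-c0) - L^2 := by nlinarith [sq_nonneg c0]
  have hDb : 0 ≤ (4*(β-c0)*(Ki-c0) - L^2) * b^2 := mul_nonneg hAB (sq_nonneg b)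
  have h4 : 0 ≤ 4*(β-c0)*((β-c0)*a^2 - L*(a*b) + (Ki-c0)*b^2) := by
    nlinarith [sq_nonneg (2*(β-c0)*a - L*b)]
  nlinarith [h4, hApos]

lemma sq_decay {F : Euc n → Euc n} (hFc : Continuous F) {zs : Euc n} {c : ℝ}
    (hLyap : ∀ w, ⟪F w, w - zs⟫ ≤ -(c * ‖w - zs‖^2))
    {z : ℝ → Euc n} {T : ℝ} (hT : 0 ≤ T)
    (hsol : ∃ v, SolutionVia (fun w => {F w}) Set.univ T z v) :
    ∀ t ∈ Set.Icc (0:ℝ) T, ‖z t - zs‖^2 ≤ ‖z 0 - zs‖^2 * Real.exp (-(2*c)*t) := by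
  obtain ⟨v, -, hvint, hvae, hzint⟩ := hsol
  set u : ℝ → Euc n := fun t => F (z t) with hu
  have hae : ∀ᵐ t ∂(volume.restrict (Set.Icc (0:ℝ) T)), v t = u t := by
    filter_upwards [hvae] with t ht using ht
  have hu_int : IntegrableOn u (Set.Icc (0:ℝ) T) := (integrable_congr hae).1 hvint
  have hae' : ∀ᵐ t ∂volume, t ∈ Set.Icc (0:ℝ) T → v t = u t :=
    (ae_restrict_iff' measurableSet_Icc).1 hae
  have hz_eq : ∀ t ∈ Set.Icc (0:ℝ) T, z t = z 0 + ∫ s in (0:ℝ)..t, u s := by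
    intro t ht
    rw [hzint t ht]
    congr 1
    apply intervalIntegral.integral_congr_ae
    filter_upwards [hae'] with s hs hsmem
    rw [Set.uIoc_of_le ht.1] at hsmem
    exact hs ⟨hsmem.1.le, hsmem.2.trans ht.2⟩
  have hprim : ContinuousOn (fun t => z 0 + ∫ s in (0:ℝ)..t, u s) (Set.Icc 0 T) := by
    apply continuousOn_const.add
    have hcp := intervalIntegral.continuousOn_primitive (μ := volume) (a := (0:ℝ)) (b := T) hu_int
    apply hcp.congr
    intro t ht
    show (∫ s in (0:ℝ)..t, u s) = ∫ s in Set.Ioc (0:ℝ) t, u s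
    rw [intervalIntegral.integral_of_le ht.1]
  have hz_cont : ContinuousOn z (Set.Icc 0 T) := hprim.congr hz_eq
  have hu_cont : ContinuousOn u (Set.Icc 0 T) := hFc.comp_continuousOn hz_cont
  have hderiv : ∀ t ∈ Set.Ioo (0:ℝ) T, HasDerivAt z (u t) t := by
    intro t ht
    have hmemnhds : Set.Icc (0:ℝ) T ∈ nhds t := Icc_mem_nhds ht.1 ht.2
    have hint : IntervalIntegrable u volume 0 t := by
      rw [intervalIntegrable_iff, Set.uIoc_of_le ht.1.le]
      exact hu_int.mono_set (Set.Ioc_subset_Icc_self.trans (Set.Icc_subset_Icc_right ht.2.le))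
    have hmeas : StronglyMeasurableAtFilter u (nhds t) volume :=
      ⟨Set.Icc 0 T, hmemnhds, hu_cont.aestronglyMeasurable measurableSet_Icc⟩
    have hconta : ContinuousAt u t := hu_cont.continuousAt hmemnhds
    have hφ : HasDerivAt (fun x => z 0 + ∫ s in (0:ℝ)..x, u s) (u t) t :=
      (intervalIntegral.integral_hasDerivAt_right hint hmeas hconta).const_add (z 0)
    apply hφ.congr_of_eventuallyEq
    filter_upwards [hmemnhds] with s hs using hz_eq s hs
  set h : ℝ → ℝ := fun t => Real.exp (2*c*t) * ⟪z t - zs, z t - zs⟫ with hh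
  have hanti : AntitoneOn h (Set.Icc 0 T) := by
    apply antitoneOn_of_hasDerivWithinAt_nonpos (convex_Icc 0 T)
      (f' := fun t => Real.exp (2*c*t) * (2*c*⟪z t - zs, z t - zs⟫
        + (⟪z t - zs, u t⟫ + ⟪u t, z t - zs⟫)))
    · apply ContinuousOn.mul
      · exact (Real.continuous_exp.comp (continuous_const.mul continuous_id)).continuousOn
      · exact (hz_cont.sub continuousOn_const).inner (hz_cont.sub continuousOn_const)
    · intro t ht
      rw [interior_Icc] at ht
      have hw : HasDerivAt (fun s => z s - zs) (u t) t := (hderiv t ht).sub_const zs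
      have hinner : HasDerivAt (fun s => ⟪z s - zs, z s - zs⟫)
          (⟪z t - zs, u t⟫ + ⟪u t, z t - zs⟫) t := hw.inner ℝ hw
      have hexp : HasDerivAt (fun s => Real.exp (2*c*s)) (Real.exp (2*c*t) * (2*c)) t := by
        simpa using ((hasDerivAt_id t).const_mul (2*c)).exp
      have hmul := hexp.mul hinner
      rw [interior_Icc]
      apply HasDerivAt.hasDerivWithinAt
      convert hmul using 1
      · rfl
      · rfl
      · ring
    · intro t ht
      rw [interior_Icc] at ht
      have hL := hLyap (z t)
      have hcomm : ⟪z t - zs, u t⟫ = ⟪u t, z t - zs⟫ := real_inner_comm _ _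
      have hsq : ⟪z t - zs, z t - zs⟫ = ‖z t - zs‖^2 := real_inner_self_eq_norm_sq _
      have hexp_pos : (0:ℝ) < Real.exp (2*c*t) := Real.exp_pos _
      have hnp : 2*c*⟪z t - zs, z t - zs⟫ + (⟪z t - zs, u t⟫ + ⟪u t, z t - zs⟫) ≤ 0 := by
        rw [hcomm, hsq]
        have hLL : ⟪u t, z t - zs⟫ ≤ -(c * ‖z t - zs‖^2) := hL
        nlinarith
      exact mul_nonpos_of_nonneg_of_nonpos hexp_pos.le hnp
  intro t ht
  have h0 : (0:ℝ) ∈ Set.Icc (0:ℝ) T := ⟨le_refl 0, hT⟩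
  have hle := hanti h0 ht ht.1
  rw [hh] at hle
  simp only [mul_zero, Real.exp_zero, one_mul] at hle
  rw [real_inner_self_eq_norm_sq, real_inner_self_eq_norm_sq] at hle
  have hexp_pos : (0:ℝ) < Real.exp (2*c*t) := Real.exp_pos _
  have hkey : ‖z t - zs‖^2 ≤ ‖z 0 - zs‖^2 / Real.exp (2*c*t) := by
    rw [le_div_iff₀ hexp_pos]; linarith
  calc ‖z t - zs‖^2 ≤ ‖z 0 - zs‖^2 / Real.exp (2*c*t) := hkey
    _ = ‖z 0 - zs‖^2 * Real.exp (-(2*c)*t) := by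
        rw [neg_mul, Real.exp_neg, div_eq_mul_inv]

end

end Stmt18Aux

open Stmt18Aux

set_option maxHeartbeats 1000000 in
/-- cf. Thm. 6.3: for closed convex `Z` and `−f` `β`-strongly monotone,
`L`-Lipschitz, and `0 < K < 4β/L²`, the anti-windup system has a unique equilibrium `z*`,
every complete solution converges to it, and `P_Z(z*)` is the unique equilibrium of the
projected dynamical system. -/
theorem stmt18 {n : ℕ} (Z : Set (Euc n)) (hZcl : IsClosed Z) (hZconv : Convex ℝ Z)
    (hZne : Z.Nonempty)
    (f : Euc n → Euc n) (L β : ℝ) (hβ : 0 < β)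
    (hLip : ∀ x ∈ Z, ∀ y ∈ Z, ‖f x - f y‖ ≤ L * ‖x - y‖)
    (hmono : ∀ x ∈ Z, ∀ x' ∈ Z, β * ‖x - x'‖ ^ 2 ≤ ⟪f x' - f x, x - x'⟫)
    (Id : Euc n → EucOp n) (hId : ∀ y : Euc n, Id y = ContinuousLinearMap.id ℝ (Euc n))
    (K : ℝ) (hK0 : 0 < K) (hK : K < 4 * β / L ^ 2) :
    ∃ zstar : Euc n,
      (0 : Euc n) ∈ AWAspec f Id Z K zstar ∧
      (∀ w : Euc n, (0 : Euc n) ∈ AWAspec f Id Z K w → w = zstar) ∧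
      (∀ z : ℝ → Euc n, IsCompleteSol (AWAspec f Id Z K) Set.univ z →
        Filter.Tendsto z Filter.atTop (nhds zstar)) ∧
      ∃ zbar : Euc n, projSet Z zstar = {zbar} ∧
        (0 : Euc n) ∈ projTanI Z (f zbar) zbar ∧
        ∀ w ∈ Z, (0 : Euc n) ∈ projTanI Z (f w) w → w = zbar := by
  classical
  choose P hP1 hP2 using fun x => proj_exists hZcl hZconv hZne x
  have hP : ∀ x, P x ∈ Z ∧ ∀ y ∈ Z, ⟪x - P x, y - P x⟫ ≤ 0 := fun x => ⟨hP1 x, hP2 x⟩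
  have hPuniq : ∀ x c, c ∈ Z → (∀ y ∈ Z, ⟪x - c, y - c⟫ ≤ 0) → c = P x :=
    fun x c hc h => proj_unique hc h (hP1 x) (hP2 x)
  have hPs : ∀ x, projSet Z x = {P x} := by
    intro x
    ext c
    rw [mem_projSet_iff hZconv hZne, Set.mem_singleton_iff]
    constructor
    · rintro ⟨hc, h⟩; exact hPuniq x c hc h
    · rintro rfl; exact ⟨hP1 x, hP2 x⟩
  obtain ⟨zb, hzbZ, hVI⟩ := vi_exists hZcl hZne hP hβ hLip hmono
  have hVIuniq : ∀ w ∈ Z, (∀ y ∈ Z, ⟪f w, y - w⟫ ≤ 0) → w = zb := by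
    intro w hw hVIw
    have h1 := hVIw zb hzbZ
    have h2 := hVI w hw
    have hm := hmono zb hzbZ w hw
    have e : ⟪f w - f zb, zb - w⟫ = ⟪f w, zb - w⟫ - ⟪f zb, zb - w⟫ := inner_sub_left _ _ _
    have e2 : ⟪f zb, zb - w⟫ = -⟪f zb, w - zb⟫ := by rw [← inner_neg_right, neg_sub]
    have hsqle : β * ‖zb - w‖^2 ≤ 0 := by rw [e, e2] at hm; linarith
    have hsq0 : ‖zb - w‖^2 = 0 := le_antisymm (by nlinarith [sq_nonneg ‖zb - w‖]) (sq_nonneg _)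
    have hz0 : zb - w = 0 := by rwa [pow_eq_zero_iff two_ne_zero, norm_eq_zero] at hsq0
    exact (sub_eq_zero.1 hz0).symm
  set zstar : Euc n := zb + K • f zb with hzstardef
  have hzsub : zstar - zb = K • f zb := by rw [hzstardef]; abel
  have hVIz : ∀ y ∈ Z, ⟪zstar - zb, y - zb⟫ ≤ 0 := by
    intro y hy
    rw [hzsub, real_inner_smul_left]
    exact mul_nonpos_of_nonneg_of_nonpos hK0.le (hVI y hy)
  have hPzstar : zb = P zstar := hPuniq zstar zb hzbZ hVIz
  set FK : Euc n → Euc n := fun w => f (P w) - K⁻¹ • (w - P w) with hFKdef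
  have hA : AWAspec f Id Z K = fun w => {FK w} := by
    funext w
    rw [AWAspec, hPs w, Set.image_singleton, hId, ContinuousLinearMap.id_apply]
  have hKinvK : ∀ x : Euc n, K⁻¹ • (K • x) = x := fun x => by
    rw [smul_smul, inv_mul_cancel₀ hK0.ne', one_smul]
  have hKKinv : ∀ x : Euc n, K • (K⁻¹ • x) = x := fun x => by
    rw [smul_smul, mul_inv_cancel₀ hK0.ne', one_smul]
  have hFKzstar : FK zstar = 0 := by
    rw [hFKdef]
    simp only [← hPzstar, hzsub, hKinvK, sub_self]
  have hKinv0 : (0:ℝ) < K⁻¹ := inv_pos.2 hK0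
  have hL2pos : (0:ℝ) < L^2 := by
    rcases eq_or_ne L 0 with h | h
    · exfalso; rw [h] at hK; norm_num at hK; linarith
    · positivity
  have hKL : K * L^2 < 4*β := (lt_div_iff₀ hL2pos).1 hK
  have hKK1 : K * K⁻¹ = 1 := mul_inv_cancel₀ hK0.ne'
  have hD : (0:ℝ) < 4*β*K⁻¹ - L^2 := by nlinarith [hKinv0, hKL, hKK1]
  set c0 : ℝ := min (min (β/2) K⁻¹) ((4*β*K⁻¹ - L^2) / (4*(β + K⁻¹))) with hc0def
  have hden : (0:ℝ) < 4*(β + K⁻¹) := by positivity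
  have hc0pos : 0 < c0 :=
    lt_min (lt_min (by linarith) hKinv0) (div_pos hD hden)
  have hApos : 0 < β - c0 := by
    have hhalf : c0 ≤ β / 2 := (min_le_left _ _).trans (min_le_left _ _)
    linarith
  have hDc : 4*c0*(β+K⁻¹) ≤ 4*β*K⁻¹ - L^2 := by
    have h := min_le_right (min (β/2) K⁻¹) ((4*β*K⁻¹ - L^2) / (4*(β + K⁻¹)))
    rw [← hc0def, le_div_iff₀ hden] at h
    linarith
  have hLyap : ∀ w, ⟪FK w, w - zstar⟫ ≤ -((c0/2) * ‖w - zstar‖^2) := by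
    intro w
    set d : Euc n := P w - zb with hd
    set e : Euc n := (w - P w) - (zstar - zb) with he
    have hwz : w - zstar = d + e := by rw [hd, he]; abel
    have hfzb : K⁻¹ • (zstar - zb) = f zb := by rw [hzsub, hKinvK]
    have hFKw : FK w = (f (P w) - f zb) - K⁻¹ • e := by
      have hKe : K⁻¹ • e = K⁻¹ • (w - P w) - f zb := by rw [he, smul_sub, hfzb]
      rw [hKe, hFKdef]
      abel
    have hexp : ⟪FK w, w - zstar⟫ = ⟪f (P w) - f zb, d⟫ + ⟪f (P w) - f zb, e⟫
        - K⁻¹ * ⟪e, d⟫ - K⁻¹ * ⟪e, e⟫ := by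
      rw [hFKw, hwz]
      simp only [inner_sub_left, inner_add_right, real_inner_smul_left]
      ring
    have h1 : ⟪f (P w) - f zb, d⟫ ≤ -(β * ‖d‖^2) := by
      have hm := hmono (P w) (hP1 w) zb hzbZ
      have e1 : ⟪f zb - f (P w), P w - zb⟫ = -⟪f (P w) - f zb, P w - zb⟫ := by
        rw [← inner_neg_left, neg_sub]
      rw [e1] at hm
      rw [hd]
      linarith
    have h2 : ⟪f (P w) - f zb, e⟫ ≤ L * (‖d‖ * ‖e‖) := by
      calc ⟪f (P w) - f zb, e⟫ ≤ ‖f (P w) - f zb‖ * ‖e‖ := real_inner_le_norm _ _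
        _ ≤ (L * ‖P w - zb‖) * ‖e‖ :=
            mul_le_mul_of_nonneg_right (hLip (P w) (hP1 w) zb hzbZ) (norm_nonneg _)
        _ = L * (‖d‖ * ‖e‖) := by rw [hd]; ring
    have h3 : 0 ≤ ⟪e, d⟫ := by
      have ha : ⟪w - P w, zb - P w⟫ ≤ 0 := hP2 w zb hzbZ
      have hb : ⟪zstar - zb, P w - zb⟫ ≤ 0 := hVIz (P w) (hP1 w)
      have e1 : ⟪w - P w, d⟫ = -⟪w - P w, zb - P w⟫ := by
        rw [hd, ← inner_neg_right, neg_sub]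
      have e2 : ⟪e, d⟫ = ⟪w - P w, d⟫ - ⟪zstar - zb, d⟫ := by rw [he, inner_sub_left]
      rw [e2, e1, hd]
      linarith
    have h4 : ⟪e, e⟫ = ‖e‖^2 := real_inner_self_eq_norm_sq _
    have h5 : ⟪FK w, w - zstar⟫ ≤ -(β*‖d‖^2) + L*(‖d‖*‖e‖) - K⁻¹*‖e‖^2 := by
      have h6 : 0 ≤ K⁻¹ * ⟪e, d⟫ := mul_nonneg hKinv0.le h3
      rw [hexp, h4]
      linarith
    have h7 := quad_bound (Ki := K⁻¹) (a := ‖d‖) (b := ‖e‖) hApos hDc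
    have h8 : ‖w - zstar‖ ≤ ‖d‖ + ‖e‖ := by rw [hwz]; exact norm_add_le d e
    have h9 : ‖w - zstar‖^2 ≤ 2*(‖d‖^2 + ‖e‖^2) := by
      nlinarith [h8, norm_nonneg (w - zstar), norm_nonneg d, norm_nonneg e,
        sq_nonneg (‖d‖ - ‖e‖)]
    nlinarith [h5, h7, h9, hc0pos.le]
  have hPcont : Continuous P := by
    have hlw : LipschitzWith 1 P := LipschitzWith.of_dist_le_mul fun x y => by
      simpa [dist_eq_norm] using proj_nonexp hP x y
    exact hlw.continuous
  have hfPcont : Continuous (fun w => f (P w)) := by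
    have hlw : LipschitzWith (max L 0).toNNReal (fun w => f (P w)) := by
      apply LipschitzWith.of_dist_le_mul
      intro x y
      rw [Real.coe_toNNReal _ (le_max_right L 0), dist_eq_norm, dist_eq_norm]
      calc ‖f (P x) - f (P y)‖ ≤ L * ‖P x - P y‖ := hLip _ (hP1 x) _ (hP1 y)
        _ ≤ (max L 0) * ‖P x - P y‖ :=
            mul_le_mul_of_nonneg_right (le_max_left _ _) (norm_nonneg _)
        _ ≤ (max L 0) * ‖x - y‖ :=
            mul_le_mul_of_nonneg_left (proj_nonexp hP x y) (le_max_right _ _)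
    exact hlw.continuous
  have hFKcont : Continuous FK := hfPcont.sub ((continuous_id.sub hPcont).const_smul K⁻¹)
  refine ⟨zstar, ?_, ?_, ?_, zb, ?_, ?_, ?_⟩
  · rw [hA]
    exact Set.mem_singleton_iff.2 hFKzstar.symm
  · intro w hw
    rw [hA] at hw
    have hFKw : FK w = 0 := (Set.mem_singleton_iff.1 hw).symm
    have h1 : w - P w = K • f (P w) := by
      have hf : f (P w) = K⁻¹ • (w - P w) := by
        rw [hFKdef] at hFKw
        exact sub_eq_zero.1 hFKw
      rw [hf, hKKinv]
    have hVIw : ∀ y ∈ Z, ⟪f (P w), y - P w⟫ ≤ 0 := by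
      intro y hy
      have hch := hP2 w y hy
      rw [h1, real_inner_smul_left] at hch
      exact le_of_mul_le_mul_left (by linarith [hch] :
        K * ⟪f (P w), y - P w⟫ ≤ K * 0) hK0
    have hPw : P w = zb := hVIuniq (P w) (hP1 w) hVIw
    have hwrw : w = P w + K • f (P w) := by rw [← h1]; abel
    rw [hwrw, hPw, hzstardef]
  · intro z hz
    rw [hA] at hz
    have hbound : ∀ t : ℝ, 0 ≤ t →
        ‖z t - zstar‖^2 ≤ ‖z 0 - zstar‖^2 * Real.exp (-(2*(c0/2))*t) := by
      intro t ht
      exact sq_decay hFKcont (by simpa using hLyap) ht (hz t ht) t ⟨ht, le_refl t⟩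
    rw [tendsto_iff_dist_tendsto_zero]
    apply squeeze_zero' (g := fun t => Real.sqrt (‖z 0 - zstar‖^2 * Real.exp (-(2*(c0/2))*t)))
    · exact Filter.Eventually.of_forall fun t => dist_nonneg
    · rw [Filter.eventually_atTop]
      refine ⟨0, fun t ht => ?_⟩
      rw [dist_eq_norm]
      calc ‖z t - zstar‖ = Real.sqrt (‖z t - zstar‖^2) := (Real.sqrt_sq (norm_nonneg _)).symm
        _ ≤ _ := Real.sqrt_le_sqrt (hbound t ht)
    · have hexp : Filter.Tendsto (fun t : ℝ => Real.exp (-(2*(c0/2))*t))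
          Filter.atTop (nhds 0) := by
        have h2 : Filter.Tendsto (fun t : ℝ => (2*(c0/2))*t) Filter.atTop Filter.atTop :=
          Filter.Tendsto.const_mul_atTop (by linarith) tendsto_id
        have h3 := Real.tendsto_exp_neg_atTop_nhds_zero.comp h2
        simpa [Function.comp_def, neg_mul] using h3
      have h4 : Filter.Tendsto (fun t : ℝ => ‖z 0 - zstar‖^2 * Real.exp (-(2*(c0/2))*t))
          Filter.atTop (nhds 0) := by
        simpa using hexp.const_mul (‖z 0 - zstar‖^2)
      have h5 := h4.sqrt
      rwa [Real.sqrt_zero] at h5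
  · rw [hPs zstar, ← hPzstar]
  · refine ⟨zero_mem_tanCone hzbZ, ?_⟩
    intro u hu
    have hinner : ⟪f zb, u⟫ ≤ 0 := inner_nonpos_on_tanCone (fun y hy => hVI y hy) hu
    rw [zero_sub, norm_neg]
    apply le_of_pow_le_pow_left₀ two_ne_zero (norm_nonneg _)
    have hsq := norm_sub_sq_real u (f zb)
    have hc : ⟪u, f zb⟫ = ⟪f zb, u⟫ := real_inner_comm _ _
    nlinarith [sq_nonneg ‖u‖]
  · intro w hw hproj
    obtain ⟨-, hmin⟩ := hproj
    have hVIw : ∀ y ∈ Z, ⟪f w, y - w⟫ ≤ 0 := by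
      intro y hy
      have key : ∀ k : ℕ, 2 * ⟪y - w, f w⟫ ≤ ((k:ℝ)+1)⁻¹ * ‖y - w‖^2 := by
        intro k
        set s : ℝ := ((k:ℝ)+1)⁻¹ with hs
        have hs0 : (0:ℝ) < s := delta_pos k
        have hs1 : s ≤ 1 := delta_le_one k
        have hmem := smul_sub_mem_tanCone hZconv hw hy hs0 hs1
        have hle := hmin _ hmem
        have hsq : ‖(0:Euc n) - f w‖^2 ≤ ‖s•(y-w) - f w‖^2 :=
          pow_le_pow_left₀ (norm_nonneg _) hle 2
        rw [zero_sub, norm_neg] at hsq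
        have hexp := norm_sub_sq_real (s•(y-w)) (f w)
        rw [real_inner_smul_left, norm_smul, Real.norm_eq_abs, abs_of_pos hs0] at hexp
        have h2 : s*(2*⟪y-w, f w⟫) ≤ s*(s*‖y-w‖^2) := by nlinarith [hsq, hexp]
        exact (mul_le_mul_iff_right₀ hs0).1 h2
      have hlim : Filter.Tendsto (fun k : ℕ => ((k:ℝ)+1)⁻¹ * ‖y - w‖^2)
          Filter.atTop (nhds 0) := by
        simpa using delta_tendsto.mul_const (‖y - w‖^2)
      have h0 : 2*⟪y - w, f w⟫ ≤ 0 := ge_of_tendsto' hlim key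
      have hc := real_inner_comm (y - w) (f w)
      linarith
    exact hVIuniq w hw hVIw
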